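/- arXiv:2508.16923 — 10 statements merged into one kernel-verified Lean document; each statement's English description precedes it below -/
import Mathlib

section
/- Let E be a vector lattice with the projection property and let x, y ∈ E. Then E decomposes as the direct sum of the band generated by (y−x)⁺, the band generated by (x−y)⁺, and the band B_{x=y} := ((x−y)⁺)ᵈ ∩ ((y−x)⁺)ᵈ (where Bᵈ denotes the disjoint complement). -/
set_option linter.unusedSectionVars false


variable {E : Type*}

section Defs
variable [Lattice E] [AddCommGroup E] [CovariantClass E E (· + ·) (· ≤ ·)]

/-- The disjoint complement of a set. -/
def dComp (A : Set E) : Set E := {x | ∀ a ∈ A, |x| ⊓ |a| = 0}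

/-- A band (in a space with the projection property) is a set equal to its double
disjoint complement. -/
def IsBand (B : Set E) : Prop := dComp (dComp B) = B

/-- The band generated by an element. -/
def bandGen (u : E) : Set E := dComp (dComp ({u} : Set E))

/-- `P` is the band projection onto `B`: every `x` decomposes as `P x ∈ B` plus
`x - P x ∈ Bᵈ`. -/
def IsBandProjection (B : Set E) (P : E → E) : Prop :=
  (∀ x, P x ∈ B) ∧ (∀ x, x - P x ∈ dComp B)

/-- `u` is a weak order unit of the band `B`. -/
def IsWeakUnitOf (B : Set E) (u : E) : Prop :=
  u ∈ B ∧ 0 ≤ u ∧ ∀ z ∈ B, u ⊓ |z| = 0 → z = 0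

/-- `u` is a weak order unit of `E`. -/
def IsWeakUnit (u : E) : Prop := 0 ≤ u ∧ ∀ z : E, u ⊓ |z| = 0 → z = 0

end Defs

section Aux
variable [Lattice E] [AddCommGroup E] [CovariantClass E E (· + ·) (· ≤ ·)]

lemma dComp_anti {A B : Set E} (h : A ⊆ B) : dComp B ⊆ dComp A :=
  fun _ hx a ha => hx a (h ha)

lemma subset_dComp_dComp (A : Set E) : A ⊆ dComp (dComp A) :=
  fun a ha x hx => by rw [inf_comm]; exact hx a ha

lemma dComp_dComp_dComp (A : Set E) : dComp (dComp (dComp A)) = dComp A :=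
  subset_antisymm (dComp_anti (subset_dComp_dComp A)) (subset_dComp_dComp (dComp A))

lemma isBand_bandGen (u : E) : IsBand (bandGen u) :=
  dComp_dComp_dComp (dComp ({u} : Set E))

lemma dComp_bandGen (u : E) : dComp (bandGen u) = dComp ({u} : Set E) :=
  dComp_dComp_dComp ({u} : Set E)

lemma add_inf_zero {a b c : E} (ha : 0 ≤ a) (hb : 0 ≤ b) (hc : 0 ≤ c)
    (h1 : a ⊓ c = 0) (h2 : b ⊓ c = 0) : (a + b) ⊓ c = 0 := by
  refine le_antisymm ?_ (le_inf (add_nonneg ha hb) hc)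
  have key : (a ⊓ c) + (b ⊓ c) = ((a + b) ⊓ (a + c)) ⊓ ((c + b) ⊓ (c + c)) := by
    rw [add_inf, inf_add, inf_add, inf_assoc, inf_assoc]
    congr 1
    rw [← inf_assoc, ← inf_assoc, inf_comm (a+c)]
  have : (a + b) ⊓ c ≤ (a ⊓ c) + (b ⊓ c) := by
    rw [key]
    refine le_inf (le_inf inf_le_left ?_) (le_inf ?_ ?_)
    · exact inf_le_right.trans (le_add_of_nonneg_left ha)
    · exact inf_le_right.trans (le_add_of_nonneg_right hb)
    · exact inf_le_right.trans (le_add_of_nonneg_right hc)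
  calc (a + b) ⊓ c ≤ (a ⊓ c) + (b ⊓ c) := this
    _ = 0 := by rw [h1, h2, add_zero]

lemma neg_mem_dComp {A : Set E} {x : E} (h : x ∈ dComp A) : -x ∈ dComp A :=
  fun a ha => by rw [abs_neg]; exact h a ha

lemma sub_mem_dComp {A : Set E} {x y : E} (hx : x ∈ dComp A) (hy : y ∈ dComp A) :
    x - y ∈ dComp A := by
  intro a ha
  have key : (|x| + |y|) ⊓ |a| = 0 :=
    add_inf_zero (abs_nonneg x) (abs_nonneg y) (abs_nonneg a) (hx a ha) (hy a ha)
  refine le_antisymm ?_ (le_inf (abs_nonneg _) (abs_nonneg _))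
  calc |x - y| ⊓ |a| ≤ (|x| + |y|) ⊓ |a| := by
        refine inf_le_inf_right _ ?_
        simpa [sub_eq_add_neg] using abs_add_le x (-y)
    _ = 0 := key

lemma add_mem_dComp {A : Set E} {x y : E} (hx : x ∈ dComp A) (hy : y ∈ dComp A) :
    x + y ∈ dComp A := by
  simpa [sub_neg_eq_add] using sub_mem_dComp hx (neg_mem_dComp hy)

lemma eq_zero_of_mem_inter_dComp {A : Set E} {x : E} (h1 : x ∈ A) (h2 : x ∈ dComp A) :
    x = 0 := by
  have h0 : |x| = 0 := by
    have := h2 x h1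
    rwa [inf_idem] at this
  have hx1 : x ≤ 0 := h0 ▸ le_abs_self x
  have hx2 : -x ≤ 0 := h0 ▸ neg_le_abs x
  exact le_antisymm hx1 (neg_nonpos.mp hx2)

end Aux

/-- band decomposition `E = B_{x<y} ⊕ B_{y<x} ⊕ B_{x=y}`. -/
theorem stmt0 [Lattice E] [AddCommGroup E] [CovariantClass E E (· + ·) (· ≤ ·)]
    [Module ℝ E] [PosSMulMono ℝ E]
    (hpp : ∀ B : Set E, IsBand B → ∃ P : E → E, IsBandProjection B P)
    (x y : E) :
    (∀ b₁ ∈ bandGen ((y - x) ⊔ 0), ∀ b₂ ∈ bandGen ((x - y) ⊔ 0), |b₁| ⊓ |b₂| = 0) ∧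
    (∀ b₁ ∈ bandGen ((y - x) ⊔ 0),
      ∀ b₃ ∈ dComp (bandGen ((x - y) ⊔ 0)) ∩ dComp (bandGen ((y - x) ⊔ 0)),
        |b₁| ⊓ |b₃| = 0) ∧
    (∀ b₂ ∈ bandGen ((x - y) ⊔ 0),
      ∀ b₃ ∈ dComp (bandGen ((x - y) ⊔ 0)) ∩ dComp (bandGen ((y - x) ⊔ 0)),
        |b₂| ⊓ |b₃| = 0) ∧
    (∀ z : E, ∃! t : E × E × E,
      t.1 ∈ bandGen ((y - x) ⊔ 0) ∧ t.2.1 ∈ bandGen ((x - y) ⊔ 0) ∧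
      t.2.2 ∈ dComp (bandGen ((x - y) ⊔ 0)) ∩ dComp (bandGen ((y - x) ⊔ 0)) ∧
      z = t.1 + t.2.1 + t.2.2) := by
  set u : E := (y - x) ⊔ 0 with hu
  set v : E := (x - y) ⊔ 0 with hv
  have hu0 : 0 ≤ u := le_sup_right
  have hv0 : 0 ≤ v := le_sup_right
  have huv : u ⊓ v = 0 := by
    have : v = (y - x)⁻ := by
      rw [negPart_def, neg_sub]
    rw [this, hu, ← posPart_def]
    exact posPart_inf_negPart_eq_zero (y - x)
  -- {u} ⊆ dComp {v} and vice versa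
  have hud : ({u} : Set E) ⊆ dComp ({v} : Set E) := by
    rintro a rfl b rfl
    rwa [abs_of_nonneg hu0, abs_of_nonneg hv0]
  have hvd : ({v} : Set E) ⊆ dComp ({u} : Set E) := by
    rintro a rfl b rfl
    rw [abs_of_nonneg hu0, abs_of_nonneg hv0, inf_comm]
    exact huv
  have hBv_sub : bandGen v ⊆ dComp ({u} : Set E) := dComp_anti hud
  have hBu_sub : bandGen u ⊆ dComp ({v} : Set E) := dComp_anti hvd
  -- the three disjointness statements
  have disj12 : ∀ b₁ ∈ bandGen u, ∀ b₂ ∈ bandGen v, |b₁| ⊓ |b₂| = 0 := by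
    intro b₁ h₁ b₂ h₂
    exact h₁ b₂ (hBv_sub h₂)
  refine ⟨disj12, ?_, ?_, ?_⟩
  · intro b₁ h₁ b₃ h₃
    have := h₃.2 b₁ h₁
    rwa [inf_comm] at this
  · intro b₂ h₂ b₃ h₃
    have := h₃.1 b₂ h₂
    rwa [inf_comm] at this
  · -- existence and uniqueness of decomposition
    obtain ⟨P, hP⟩ := hpp (bandGen u) (isBand_bandGen u)
    obtain ⟨Q, hQ⟩ := hpp (bandGen v) (isBand_bandGen v)
    intro z
    set z₁ := P z with hz₁
    set z' := z - P z with hz'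
    set z₂ := Q z' with hz₂
    set z₃ := z' - Q z' with hz₃
    have hz'mem : z' ∈ dComp (bandGen u) := hP.2 z
    have hz₁mem : z₁ ∈ bandGen u := hP.1 z
    have hz₂mem : z₂ ∈ bandGen v := hQ.1 z'
    have hz₃v : z₃ ∈ dComp (bandGen v) := hQ.2 z'
    have hQz'u : z₂ ∈ dComp (bandGen u) := by
      rw [dComp_bandGen]
      exact hBv_sub hz₂mem
    have hz₃u : z₃ ∈ dComp (bandGen u) := sub_mem_dComp hz'mem hQz'u
    have hdecomp : z = z₁ + z₂ + z₃ := by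
      rw [hz₃, ← hz₂, hz', ← hz₁]; abel
    refine ⟨(z₁, z₂, z₃), ⟨hz₁mem, hz₂mem, ⟨hz₃v, hz₃u⟩, hdecomp⟩, ?_⟩
    rintro ⟨a₁, a₂, a₃⟩ ⟨ha₁, ha₂, ⟨ha₃v, ha₃u⟩, heq⟩
    simp only at ha₁ ha₂ ha₃v ha₃u heq
    have hsum : a₁ + a₂ + a₃ = z₁ + z₂ + z₃ := by
      rw [← heq]; exact hdecomp
    have hz0 : (a₁ - z₁) + ((a₂ - z₂) + (a₃ - z₃)) = 0 := by
      have : (a₁ - z₁) + ((a₂ - z₂) + (a₃ - z₃)) = (a₁ + a₂ + a₃) - (z₁ + z₂ + z₃) := by abel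
      rw [this, hsum, sub_self]
    -- a₁ = z₁
    have hd₁B : a₁ - z₁ ∈ bandGen u := sub_mem_dComp ha₁ hz₁mem
    have hd₂u : a₂ - z₂ ∈ dComp (bandGen u) := by
      rw [dComp_bandGen]
      exact sub_mem_dComp (fun b hb => (hBv_sub ha₂) b hb) (fun b hb => (hBv_sub hz₂mem) b hb)
    have hd₃u : a₃ - z₃ ∈ dComp (bandGen u) := sub_mem_dComp ha₃u hz₃u
    have hd₁d : a₁ - z₁ ∈ dComp (bandGen u) := by
      have h := eq_neg_of_add_eq_zero_left hz0
      rw [h]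
      exact neg_mem_dComp (add_mem_dComp hd₂u hd₃u)
    have h1 : a₁ - z₁ = 0 := eq_zero_of_mem_inter_dComp hd₁B hd₁d
    have e1 : a₁ = z₁ := sub_eq_zero.mp h1
    rw [h1, zero_add] at hz0
    -- a₂ = z₂
    have hd₂B : a₂ - z₂ ∈ bandGen v := sub_mem_dComp ha₂ hz₂mem
    have hd₂d : a₂ - z₂ ∈ dComp (bandGen v) := by
      have h := eq_neg_of_add_eq_zero_left hz0
      rw [h]
      exact neg_mem_dComp (sub_mem_dComp ha₃v hz₃v)
    have h2 : a₂ - z₂ = 0 := eq_zero_of_mem_inter_dComp hd₂B hd₂d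
    have e2 : a₂ = z₂ := sub_eq_zero.mp h2
    rw [h2, zero_add] at hz0
    have e3 : a₃ = z₃ := sub_eq_zero.mp hz0
    simp [e1, e2, e3]
end

section
/- Let E be a vector lattice with the projection property and x, y ∈ E. The band B_{x=y} := ((x−y)⁺)ᵈ ∩ ((y−x)⁺)ᵈ is the largest band whose band projection P satisfies P(x) = P(y); that is, if B is any band whose projection P satisfies P(x) = P(y), then B ⊆ B_{x=y}. -/
variable {E : Type*}

section Aux
variable [Lattice E] [AddCommGroup E] [CovariantClass E E (· + ·) (· ≤ ·)]

lemma aux_inf_add (a b c : E) (ha : 0 ≤ a) (hb : 0 ≤ b) (hc : 0 ≤ c) :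
    (a + b) ⊓ c ≤ a ⊓ c + b ⊓ c := by
  have h1 : (a + b) ⊓ c ≤ a ⊓ c + b := by
    have : a ⊓ c + b = (a + b) ⊓ (c + b) := by
      rw [add_comm (a ⊓ c) b, add_inf, add_comm b a, add_comm b c]
    rw [this]
    exact inf_le_inf_left _ (le_add_of_nonneg_right hb)
  have h2 : (a + b) ⊓ c ≤ a ⊓ c + c :=
    le_trans inf_le_right (le_add_of_nonneg_left (le_inf ha hc))
  calc (a + b) ⊓ c ≤ (a ⊓ c + b) ⊓ (a ⊓ c + c) := le_inf h1 h2
    _ = a ⊓ c + b ⊓ c := (add_inf b c (a ⊓ c)).symm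

/-- dComp is "solid": if `|w| ≤ |v|` and `v ∈ dComp A` then `w ∈ dComp A`. -/
lemma dComp_solid {A : Set E} {v w : E} (hle : |w| ≤ |v|) (hv : v ∈ dComp A) :
    w ∈ dComp A := by
  intro a ha
  have h0 : 0 ≤ |w| ⊓ |a| := le_inf (abs_nonneg w) (abs_nonneg a)
  have h1 : |w| ⊓ |a| ≤ |v| ⊓ |a| := inf_le_inf_right _ hle
  rw [hv a ha] at h1
  exact le_antisymm h1 h0

lemma dComp_sub {A : Set E} {v w : E} (hv : v ∈ dComp A) (hw : w ∈ dComp A) :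
    v - w ∈ dComp A := by
  intro a ha
  have h0 : 0 ≤ |v - w| ⊓ |a| := le_inf (abs_nonneg _) (abs_nonneg a)
  have habs : |v - w| ≤ |v| + |w| := by
    rw [sub_eq_add_neg]
    simpa [abs_neg] using abs_add_le v (-w)
  have h1 : |v - w| ⊓ |a| ≤ (|v| + |w|) ⊓ |a| :=
    inf_le_inf_right _ habs
  have h2 : (|v| + |w|) ⊓ |a| ≤ |v| ⊓ |a| + |w| ⊓ |a| :=
    aux_inf_add _ _ _ (abs_nonneg v) (abs_nonneg w) (abs_nonneg a)
  rw [hv a ha, hw a ha, add_zero] at h2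
  exact le_antisymm (h1.trans h2) h0

/-- If `u ∈ dComp B` then `B ⊆ dComp (bandGen u)`. -/
lemma subset_dComp_bandGen {B : Set E} {u : E} (hu : u ∈ dComp B) :
    B ⊆ dComp (bandGen u) := by
  intro b hb
  have hbu : b ∈ dComp ({u} : Set E) := by
    intro a ha
    rw [Set.mem_singleton_iff] at ha
    subst ha
    rw [inf_comm]
    exact hu b hb
  exact subset_dComp_dComp (dComp ({u} : Set E)) hbu

end Aux

/-- `B_{x=y}` is the largest band whose projection `P` satisfies
`P x = P y`. -/
theorem stmt3 [Lattice E] [AddCommGroup E] [CovariantClass E E (· + ·) (· ≤ ·)]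
    [Module ℝ E] [PosSMulMono ℝ E]
    (hpp : ∀ B : Set E, IsBand B → ∃ P : E → E, IsBandProjection B P)
    (x y : E) (B : Set E) (P : E → E)
    (hB : IsBand B) (hP : IsBandProjection B P) (h : P x = P y) :
    B ⊆ dComp (bandGen ((x - y) ⊔ 0)) ∩ dComp (bandGen ((y - x) ⊔ 0)) := by
  have hxy : x - y ∈ dComp B := by
    have := dComp_sub (hP.2 x) (hP.2 y)
    rw [h] at this
    have heq : x - P y - (y - P y) = x - y := by abel
    rwa [heq] at this
  have hyx : y - x ∈ dComp B := by
    have : -(x - y) = y - x := by abel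
    rw [← this]
    exact dComp_solid (le_of_eq (abs_neg _)) hxy
  have key : ∀ v : E, |v ⊔ 0| ≤ |v| := by
    intro v
    rw [abs_of_nonneg le_sup_right]
    exact sup_le (le_abs_self v) (abs_nonneg v)
  have h1 : (x - y) ⊔ 0 ∈ dComp B := dComp_solid (key (x - y)) hxy
  have h2 : (y - x) ⊔ 0 ∈ dComp B := dComp_solid (key (y - x)) hyx
  exact Set.subset_inter (subset_dComp_bandGen h1) (subset_dComp_bandGen h2)
end

section
/- Let E be an Archimedean Φ-algebra (f-algebra with multiplicative unit e) and B a projection band with projection P. Then for all x, y ∈ E: P(xy) = P(x)P(y) = P(x)y = P(y)x. -/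
variable {E : Type*}

section Aux
variable [CommRing E] [Lattice E] [CovariantClass E E (· + ·) (· ≤ ·)]

private lemma aux_inf0 {a b c : E} (h : b ≤ c) (hb : 0 ≤ b) (ha : 0 ≤ a)
    (hc : c ⊓ a = 0) : b ⊓ a = 0 :=
  le_antisymm (hc ▸ inf_le_inf_right a h) (le_inf hb ha)

private lemma aux_abs_nonpos {w : E} (h : |w| ≤ 0) : w = 0 :=
  le_antisymm ((le_abs_self w).trans h) (neg_nonpos.mp ((neg_le_abs w).trans h))

private lemma aux_add_inf {u v a : E} (hu : 0 ≤ u) (hv : 0 ≤ v) (ha : 0 ≤ a)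
    (h1 : u ⊓ a = 0) (h2 : v ⊓ a = 0) : (u + v) ⊓ a = 0 := by
  have key : (u + v) ⊓ a ≤ (u ⊓ a) + (v ⊓ a) := by
    rw [add_inf, inf_add, inf_add]
    refine le_inf (le_inf inf_le_left ?_) (le_inf ?_ ?_)
    · exact le_trans inf_le_right (le_add_of_nonneg_right hv)
    · exact le_trans inf_le_right (le_add_of_nonneg_left hu)
    · exact le_trans inf_le_right (le_add_of_nonneg_left ha)
  rw [h1, h2, add_zero] at key
  exact le_antisymm key (le_inf (add_nonneg hu hv) ha)

private lemma aux_ring {p n q m : E} (h1 : 0 ≤ p * q) (h2 : 0 ≤ p * m)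
    (h3 : 0 ≤ n * q) (h4 : 0 ≤ n * m) :
    |(p - n) * (q - m)| ≤ (p + n) * (q + m) := by
  rw [abs_le']
  constructor
  · rw [← sub_nonneg]
    have e : (p + n) * (q + m) - (p - n) * (q - m) = (p * m + n * q) + (p * m + n * q) := by
      ring
    rw [e]
    exact add_nonneg (add_nonneg h2 h3) (add_nonneg h2 h3)
  · rw [← sub_nonneg]
    have e : (p + n) * (q + m) - -((p - n) * (q - m))
        = (p * q + n * m) + (p * q + n * m) := by ring
    rw [e]
    exact add_nonneg (add_nonneg h1 h4) (add_nonneg h1 h4)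

private lemma aux_abs_mul_le (hmulpos : ∀ a b : E, 0 ≤ a → 0 ≤ b → 0 ≤ a * b)
    (a b : E) : |a * b| ≤ |a| * |b| := by
  calc |a * b| = |(a⁺ - a⁻) * (b⁺ - b⁻)| := by
        rw [posPart_sub_negPart, posPart_sub_negPart]
    _ ≤ (a⁺ + a⁻) * (b⁺ + b⁻) :=
        aux_ring (hmulpos _ _ (posPart_nonneg a) (posPart_nonneg b))
          (hmulpos _ _ (posPart_nonneg a) (negPart_nonneg b))
          (hmulpos _ _ (negPart_nonneg a) (posPart_nonneg b))
          (hmulpos _ _ (negPart_nonneg a) (negPart_nonneg b))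
    _ = |a| * |b| := by rw [posPart_add_negPart, posPart_add_negPart]

private lemma aux_disj_mul (hmulpos : ∀ a b : E, 0 ≤ a → 0 ≤ b → 0 ≤ a * b)
    (hfalg : ∀ a b c : E, a ⊓ b = 0 → 0 ≤ c → (c * a) ⊓ b = 0)
    {a b : E} (h : |a| ⊓ |b| = 0) : a * b = 0 := by
  have h1 : (|b| * |a|) ⊓ |b| = 0 := hfalg _ _ _ h (abs_nonneg b)
  have h2 : (|a| * |b|) ⊓ (|b| * |a|) = 0 := by
    refine hfalg |b| (|b| * |a|) |a| ?_ (abs_nonneg a)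
    rw [inf_comm] at h1; exact h1
  rw [mul_comm, inf_idem] at h2
  rw [mul_comm] at h2
  exact aux_abs_nonpos (h2 ▸ aux_abs_mul_le hmulpos a b)

private lemma aux_dComp_sub {A : Set E} {a b : E} (ha : a ∈ dComp A)
    (hb : b ∈ dComp A) : a - b ∈ dComp A := by
  intro c hc
  have h1 : |a - b| ≤ |a| + |b| := by
    calc |a - b| = |a + -b| := by rw [sub_eq_add_neg]
    _ ≤ |a| + |-b| := abs_add_le a (-b)
    _ = |a| + |b| := by rw [abs_neg]
  exact aux_inf0 h1 (abs_nonneg _) (abs_nonneg _)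
    (aux_add_inf (abs_nonneg a) (abs_nonneg b) (abs_nonneg c) (ha c hc) (hb c hc))

end Aux

/-- in an Archimedean Φ-algebra, band projections satisfy
`P (x*y) = P x * P y = P x * y = P y * x`. -/
theorem stmt7 [CommRing E] [Lattice E] [CovariantClass E E (· + ·) (· ≤ ·)]
    (hmulpos : ∀ a b : E, 0 ≤ a → 0 ≤ b → 0 ≤ a * b)
    (hfalg : ∀ a b c : E, a ⊓ b = 0 → 0 ≤ c → (c * a) ⊓ b = 0)
    (harch : ∀ x y : E, (∀ n : ℕ, n • x ≤ y) → x ≤ 0)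
    (B : Set E) (P : E → E) (hB : IsBand B) (hP : IsBandProjection B P)
    (x y : E) :
    P (x * y) = P x * P y ∧ P (x * y) = P x * y ∧ P (x * y) = P y * x := by
  obtain ⟨hPB, hPd⟩ := hP
  have hBd : ∀ b ∈ B, ∀ d ∈ dComp B, b * d = 0 := by
    intro b hb d hd
    refine aux_disj_mul hmulpos hfalg ?_
    rw [inf_comm]; exact hd b hb
  have hx : x - P x ∈ dComp B := hPd x
  have hy : y - P y ∈ dComp B := hPd y
  have e1 : P x * (y - P y) = 0 := hBd _ (hPB x) _ hy
  have e2 : P y * (x - P x) = 0 := hBd _ (hPB y) _ hx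
  have hdecomp : x * y = P x * P y + (x - P x) * (y - P y) := by
    linear_combination e1 + e2
  have hmemB : P x * P y ∈ B := by
    rw [← hB]
    intro d hd
    have h1 : |P x| ⊓ |d| = 0 := by rw [inf_comm]; exact hd _ (hPB x)
    have h2 : (|P y| * |P x|) ⊓ |d| = 0 := hfalg _ _ _ h1 (abs_nonneg _)
    refine aux_inf0 ?_ (abs_nonneg _) (abs_nonneg _) h2
    rw [mul_comm]; exact aux_abs_mul_le hmulpos _ _
  have hmemd : (x - P x) * (y - P y) ∈ dComp B := by
    intro b hb
    have h1 : |x - P x| ⊓ |b| = 0 := hx b hb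
    have h2 : (|y - P y| * |x - P x|) ⊓ |b| = 0 := hfalg _ _ _ h1 (abs_nonneg _)
    refine aux_inf0 ?_ (abs_nonneg _) (abs_nonneg _) h2
    rw [mul_comm]; exact aux_abs_mul_le hmulpos _ _
  have hmain : P (x * y) = P x * P y := by
    have hwB : P (x * y) - P x * P y ∈ B := by
      rw [← hB]
      refine aux_dComp_sub ?_ ?_
      · show P (x * y) ∈ dComp (dComp B); rw [hB]; exact hPB (x * y)
      · show P x * P y ∈ dComp (dComp B); rw [hB]; exact hmemB
    have hwd : P (x * y) - P x * P y ∈ dComp B := by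
      have e : P (x * y) - P x * P y
          = (x - P x) * (y - P y) - (x * y - P (x * y)) := by
        linear_combination e1 + e2
      rw [e]
      exact aux_dComp_sub hmemd (hPd (x * y))
    have h0 : |P (x * y) - P x * P y| ⊓ |P (x * y) - P x * P y| = 0 := hwd _ hwB
    rw [inf_idem] at h0
    exact sub_eq_zero.mp (aux_abs_nonpos h0.le)
  refine ⟨hmain, ?_, ?_⟩
  · rw [hmain]; linear_combination -e1
  · rw [hmain]; linear_combination -e2
end

section
/- Let E be an Archimedean Φ-algebra with unit e and B a projection band with projection P. Then B = P(e)·E, i.e., B equals the set {P(e)·x : x ∈ E}. -/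
variable {E : Type*}

/-- in an Archimedean Φ-algebra with unit `1`, a projection band
equals `P(1)·E`. -/
theorem stmt8 [CommRing E] [Lattice E] [CovariantClass E E (· + ·) (· ≤ ·)]
    (hmulpos : ∀ a b : E, 0 ≤ a → 0 ≤ b → 0 ≤ a * b)
    (hfalg : ∀ a b c : E, a ⊓ b = 0 → 0 ≤ c → (c * a) ⊓ b = 0)
    (harch : ∀ x y : E, (∀ n : ℕ, n • x ≤ y) → x ≤ 0)
    (B : Set E) (P : E → E) (hB : IsBand B) (hP : IsBandProjection B P) :
    B = Set.range (fun x : E => P 1 * x) := by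
  have habs : ∀ a b : E, |a * b| ≤ |a| * |b| := by
    intro a b
    have key : ∀ x y : E, x * y ≤ |x| * |y| := by
      intro x y
      have h1 : 0 ≤ x⁺ * y⁻ := hmulpos _ _ (posPart_nonneg x) (negPart_nonneg y)
      have h2 : 0 ≤ x⁻ * y⁺ := hmulpos _ _ (negPart_nonneg x) (posPart_nonneg y)
      have hx := posPart_sub_negPart x
      have hy := posPart_sub_negPart y
      have hax := posPart_add_negPart x
      have hay := posPart_add_negPart y
      have hid : |x| * |y| - x * y = (x⁺ * y⁻ + x⁻ * y⁺) + (x⁺ * y⁻ + x⁻ * y⁺) := by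
        rw [← hax, ← hay]
        linear_combination (y⁺ - y⁻) * hx + x * hy
      have hnn : 0 ≤ |x| * |y| - x * y := by
        rw [hid]; exact add_nonneg (add_nonneg h1 h2) (add_nonneg h1 h2)
      exact sub_nonneg.1 hnn
    have h1 : a * b ≤ |a| * |b| := key a b
    have h2 : -(a * b) ≤ |a| * |b| := by
      have := key (-a) b
      rwa [abs_neg, neg_mul] at this
    exact abs_le'.2 ⟨h1, h2⟩
  have hdisj0 : ∀ a b : E, 0 ≤ a → 0 ≤ b → a ⊓ b = 0 → a * b = 0 := by
    intro a b ha hb h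
    have h1 : (b * a) ⊓ b = 0 := hfalg a b b h hb
    have h2 : b ⊓ (b * a) = 0 := by rwa [inf_comm] at h1
    have h3 : (a * b) ⊓ (b * a) = 0 := hfalg b (b * a) a h2 ha
    rwa [mul_comm b a, inf_idem] at h3
  have hdisjmul : ∀ a b : E, |a| ⊓ |b| = 0 → a * b = 0 := by
    intro a b h
    have h0 : |a| * |b| = 0 := hdisj0 _ _ (abs_nonneg a) (abs_nonneg b) h
    have h1 : |a * b| ≤ 0 := (habs a b).trans h0.le
    have h2 : a * b ≤ 0 := (le_abs_self _).trans h1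
    have h3 : -(a * b) ≤ 0 := (neg_le_abs _).trans h1
    exact le_antisymm h2 (by simpa using h3)
  obtain ⟨hPmem, hPcomp⟩ := hP
  ext b
  constructor
  · -- b ∈ B → b = P 1 * b
    intro hb
    refine ⟨b, ?_⟩
    have hq : (1 : E) - P 1 ∈ dComp B := hPcomp 1
    have hqb : ((1 : E) - P 1) * b = 0 := hdisjmul _ _ (hq b hb)
    have : P 1 * b = b := by linear_combination -hqb
    simpa using this
  · -- P 1 * x ∈ B
    rintro ⟨x, rfl⟩
    rw [← hB]
    intro y hy
    have hpy : |P 1| ⊓ |y| = 0 := by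
      have := hy (P 1) (hPmem 1)
      rwa [inf_comm] at this
    have h1 : (|x| * |P 1|) ⊓ |y| = 0 := hfalg _ _ _ hpy (abs_nonneg x)
    have h2 : |P 1 * x| ≤ |x| * |P 1| := by
      rw [mul_comm (P 1) x]; exact habs x (P 1)
    have h3 : |P 1 * x| ⊓ |y| ≤ (|x| * |P 1|) ⊓ |y| :=
      inf_le_inf_right _ h2
    have h4 : 0 ≤ |P 1 * x| ⊓ |y| := le_inf (abs_nonneg _) (abs_nonneg _)
    exact le_antisymm (h1 ▸ h3) h4
end

section
/- Let E be a vector lattice. A function f : D → E (with D ⊆ E) is order continuous at c ∈ D if and only if for every downward directed set Δ ⊆ E⁺ with infimum 0 there exists a set Ε ⊆ E⁺ with infimum 0 such that for every ε ∈ Ε there exists δ ∈ Δ satisfying: for all x ∈ D, |x − c| ≤ δ implies |f(x) − f(c)| ≤ ε. -/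
variable {E : Type*}

section
universe u

/-- A net `x : ι → E` order converges to `l`: there is a set `Ε` with infimum `0`
such that for each `ε ∈ Ε` the net is eventually within `ε` of `l`. -/
def OrderConvNet {E : Type u} [Lattice E] [AddCommGroup E]
    [CovariantClass E E (· + ·) (· ≤ ·)] {ι : Type u} [Preorder ι]
    (x : ι → E) (l : E) : Prop :=
  ∃ Eps : Set E, IsGLB Eps 0 ∧
    ∀ ε ∈ Eps, ∃ α₀ : ι, ∀ α, α₀ ≤ α → |x α - l| ≤ ε

section Aux10
set_option linter.unusedSectionVars false
variable {E : Type u} [Lattice E] [AddCommGroup E] [CovariantClass E E (· + ·) (· ≤ ·)]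

lemma aux_lbfin {Δ : Set E} (hdir : DirectedOn (· ≥ ·) Δ) {δ₀ : E} (hδ₀ : δ₀ ∈ Δ) :
    ∀ F : Finset E, ↑F ⊆ Δ → ∃ δ ∈ Δ, δ ≤ δ₀ ∧ ∀ e ∈ F, δ ≤ e := by
  classical
  intro F
  induction F using Finset.induction_on with
  | empty => exact fun _ => ⟨δ₀, hδ₀, le_rfl, by simp⟩
  | @insert a F ha ih =>
    intro hsub
    have haΔ : a ∈ Δ := hsub (by simp)
    obtain ⟨δ, hδΔ, hδδ₀, hδF⟩ := ih (fun e he => hsub (by simp [he]))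
    obtain ⟨δ', hδ'Δ, h1, h2⟩ := hdir δ hδΔ a haΔ
    refine ⟨δ', hδ'Δ, le_trans h1 hδδ₀, ?_⟩
    intro e he
    rcases Finset.mem_insert.mp he with rfl | he
    · exact h2
    · exact le_trans h1 (hδF e he)

lemma aux_avoid {Δ : Set E} (hdir : DirectedOn (· ≥ ·) Δ) (hglb : IsGLB Δ 0)
    (h0 : (0:E) ∉ Δ) {δ₀ : E} (hδ₀ : δ₀ ∈ Δ) (F : Finset E) :
    ∃ δ ∈ Δ, δ ≤ δ₀ ∧ δ ∉ F := by
  classical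
  by_contra hcon
  push_neg at hcon
  have key : ∀ G : Finset E, ∃ m ∈ Δ, m ≤ δ₀ ∧ ∀ e ∈ G, e ∈ Δ → e ≤ δ₀ → m ≤ e := by
    intro G
    induction G using Finset.induction_on with
    | empty => exact ⟨δ₀, hδ₀, le_rfl, by simp⟩
    | @insert a G ha ih =>
      obtain ⟨m, hmΔ, hmδ₀, hm⟩ := ih
      by_cases haΔ : a ∈ Δ
      · obtain ⟨m', hm'Δ, h1, h2⟩ := hdir m hmΔ a haΔ
        refine ⟨m', hm'Δ, le_trans h1 hmδ₀, ?_⟩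
        intro e he heΔ heδ₀
        rcases Finset.mem_insert.mp he with rfl | he
        · exact h2
        · exact le_trans h1 (hm e he heΔ heδ₀)
      · refine ⟨m, hmΔ, hmδ₀, ?_⟩
        intro e he heΔ heδ₀
        rcases Finset.mem_insert.mp he with rfl | he
        · exact absurd heΔ haΔ
        · exact hm e he heΔ heδ₀
  obtain ⟨m, hmΔ, hmδ₀, hm⟩ := key F
  have hmlb : m ∈ lowerBounds Δ := by
    intro d hd
    obtain ⟨e, heΔ, h1, h2⟩ := hdir m hmΔ d hd
    have heδ₀ : e ≤ δ₀ := le_trans h1 hmδ₀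
    exact le_trans (hm e (hcon e heΔ heδ₀) heΔ heδ₀) h2
  have hm0 : m = 0 := le_antisymm (hglb.2 hmlb) (hglb.1 hmΔ)
  exact h0 (hm0 ▸ hmΔ)

/-- The index type for the auxiliary net. -/
def auxP (Δ D : Set E) (c : E) : Type u :=
  {p : E × E // p.1 ∈ Δ ∧ p.2 ∈ D ∧ |p.2 - c| ≤ p.1}

/-- `p` is the distinguished element of `s`. -/
def auxPred (Δ D : Set E) (c : E) (s : Finset (auxP Δ D c)) (p : auxP Δ D c) : Prop :=
  p ∈ s ∧ ∀ q ∈ s, p.1.1 ≤ q.1.1 ∧ (q.1.1 = p.1.1 → q = p)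

lemma auxPred_unique {Δ D : Set E} {c : E} {s : Finset (auxP Δ D c)} {p p' : auxP Δ D c}
    (hp : auxPred Δ D c s p) (hp' : auxPred Δ D c s p') : p = p' := by
  have h1 := (hp.2 p' hp'.1).1
  have h2 := (hp'.2 p hp.1).1
  exact ((hp.2 p' hp'.1).2 (le_antisymm h2 h1)).symm

open Classical in
/-- The auxiliary net. -/
noncomputable def auxNet (Δ D : Set E) (c : E) (s : Finset (auxP Δ D c)) : E :=
  if h : ∃ p, auxPred Δ D c s p then h.choose.1.2 else c

lemma auxNet_eq {Δ D : Set E} {c : E} {s : Finset (auxP Δ D c)} {p : auxP Δ D c}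
    (hp : auxPred Δ D c s p) : auxNet Δ D c s = p.1.2 := by
  have hex : ∃ q, auxPred Δ D c s q := ⟨p, hp⟩
  rw [auxNet, dif_pos hex]
  exact congrArg (fun q : auxP Δ D c => q.1.2) (auxPred_unique hex.choose_spec hp)
end Aux10

/-- ε-δ reformulation of order continuity at a point `c` of the
domain `D`. -/
theorem stmt10 {E : Type u} [Lattice E] [AddCommGroup E]
    [CovariantClass E E (· + ·) (· ≤ ·)] [Module ℝ E] [PosSMulMono ℝ E]
    (D : Set E) (f : E → E) (c : E) (hc : c ∈ D) :
    (∀ (ι : Type u) [Nonempty ι] [SemilatticeSup ι] (x : ι → E),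
        (∀ α, x α ∈ D) → OrderConvNet x c →
          OrderConvNet (fun α => f (x α)) (f c)) ↔
    (∀ Δ : Set E, DirectedOn (· ≥ ·) Δ → IsGLB Δ 0 →
      ∃ Eps : Set E, IsGLB Eps 0 ∧
        ∀ ε ∈ Eps, ∃ δ ∈ Δ, ∀ x ∈ D, |x - c| ≤ δ → |f x - f c| ≤ ε) := by
  classical
  constructor
  · intro H Δ hdir hglb
    by_cases hne : Δ = ∅
    · exact ⟨∅, hne ▸ hglb, by simp⟩
    by_cases h0 : (0:E) ∈ Δ
    · refine ⟨{ε | (0:E) ≤ ε}, ⟨fun ε hε => hε, fun b hb => hb (le_refl (0:E))⟩, ?_⟩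
      intro ε hε
      refine ⟨0, h0, ?_⟩
      intro y hyD hyle
      have habs : |y - c| = 0 := le_antisymm hyle (abs_nonneg _)
      have hyc : y = c := by
        have h1 : y - c ≤ 0 := le_trans (le_abs_self _) habs.le
        have h2 : (0:E) ≤ y - c := neg_nonpos.mp (le_trans (neg_le_abs _) habs.le)
        exact sub_eq_zero.mp (le_antisymm h1 h2)
      rw [hyc, sub_self, abs_zero]
      exact hε
    obtain ⟨δ₁, hδ₁⟩ := Set.nonempty_iff_ne_empty.mpr hne
    letI : DecidableEq (auxP Δ D c) := Classical.decEq _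
    -- the choice function G
    have hG : ∀ s : Finset (auxP Δ D c),
        ∃ δ ∈ Δ, (∀ p ∈ s, δ ≤ p.1.1) ∧ (∀ p ∈ s, δ ≠ p.1.1) := by
      intro s
      have hsub : ↑(s.image fun p : auxP Δ D c => p.1.1) ⊆ Δ := by
        intro e he
        simp only [Finset.coe_image, Set.mem_image, Finset.mem_coe] at he
        obtain ⟨p, -, rfl⟩ := he
        exact p.2.1
      obtain ⟨δ₂, hδ₂Δ, -, hδ₂⟩ := aux_lbfin hdir hδ₁ _ hsub
      obtain ⟨δ, hδΔ, hδle, hδnot⟩ :=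
        aux_avoid hdir hglb h0 hδ₂Δ (s.image fun p : auxP Δ D c => p.1.1)
      refine ⟨δ, hδΔ, ?_, ?_⟩
      · exact fun p hp => le_trans hδle (hδ₂ _ (Finset.mem_image_of_mem _ hp))
      · intro p hp heq
        exact hδnot (by rw [heq]; exact Finset.mem_image_of_mem _ hp)
    choose G hGΔ hGle hGne using hG
    -- the net converges to c
    have hmem : ∀ s, auxNet Δ D c s ∈ D := by
      intro s
      by_cases h : ∃ p, auxPred Δ D c s p
      · rw [auxNet_eq h.choose_spec]; exact h.choose.2.2.1
      · rw [auxNet, dif_neg h]; exact hc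
    have hconv : OrderConvNet (auxNet Δ D c) c := by
      refine ⟨Δ, hglb, ?_⟩
      intro δ hδ
      refine ⟨{⟨(δ, c), ⟨hδ, hc, by simpa using hglb.1 hδ⟩⟩}, ?_⟩
      intro s hs
      by_cases h : ∃ p, auxPred Δ D c s p
      · rw [auxNet_eq h.choose_spec]
        have hq : (⟨(δ, c), ⟨hδ, hc, by simpa using hglb.1 hδ⟩⟩ : auxP Δ D c) ∈ s :=
          Finset.le_iff_subset.mp hs (Finset.mem_singleton_self _)
        exact le_trans h.choose.2.2.2 (h.choose_spec.2 _ hq).1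
      · rw [auxNet, dif_neg h]
        simpa using hglb.1 hδ
    obtain ⟨Eps, hEglb, hE⟩ := H (Finset (auxP Δ D c)) (auxNet Δ D c) hmem hconv
    refine ⟨Eps, hEglb, ?_⟩
    intro ε hε
    obtain ⟨s₀, hs₀⟩ := hE ε hε
    refine ⟨G s₀, hGΔ s₀, ?_⟩
    intro y hyD hyle
    set p : auxP Δ D c := ⟨(G s₀, y), ⟨hGΔ s₀, hyD, hyle⟩⟩ with hp
    have hpred : auxPred Δ D c (insert p s₀) p := by
      refine ⟨Finset.mem_insert_self _ _, ?_⟩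
      intro q hq
      rcases Finset.mem_insert.mp hq with rfl | hq
      · exact ⟨le_rfl, fun _ => rfl⟩
      · exact ⟨hGle s₀ q hq, fun h => absurd h.symm (hGne s₀ q hq)⟩
    have hxs : auxNet Δ D c (insert p s₀) = y := auxNet_eq hpred
    have := hs₀ (insert p s₀) (Finset.le_iff_subset.mpr (Finset.subset_insert _ _))
    simpa only [hxs] using this
  · intro h ι _ _ x hxD hconv
    obtain ⟨Δ₀, hglb₀, hev⟩ := hconv
    set Δ : Set E := {d | ∃ s : Finset E, ∃ hs : s.Nonempty, ↑s ⊆ Δ₀ ∧ d = s.inf' hs id}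
      with hΔ
    have hdir : DirectedOn (· ≥ ·) Δ := by
      rintro d₁ ⟨s₁, hs₁, hsub₁, rfl⟩ d₂ ⟨s₂, hs₂, hsub₂, rfl⟩
      have hU : (s₁ ∪ s₂).Nonempty := hs₁.mono Finset.subset_union_left
      refine ⟨(s₁ ∪ s₂).inf' hU id, ⟨s₁ ∪ s₂, hU, ?_, rfl⟩, ?_, ?_⟩
      · intro e he
        rcases Finset.mem_union.mp (Finset.mem_coe.mp he) with h' | h'
        · exact hsub₁ h'
        · exact hsub₂ h'
      · exact Finset.le_inf' hs₁ id fun b hb => Finset.inf'_le id (Finset.mem_union_left _ hb)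
      · exact Finset.le_inf' hs₂ id fun b hb => Finset.inf'_le id (Finset.mem_union_right _ hb)
    have hglb : IsGLB Δ 0 := by
      constructor
      · rintro d ⟨s, hs, hsub, rfl⟩
        exact Finset.le_inf' hs id fun b hb => hglb₀.1 (hsub hb)
      · intro b hb
        refine hglb₀.2 ?_
        intro e he
        exact hb ⟨{e}, Finset.singleton_nonempty e, by simpa using he, by simp⟩
    obtain ⟨Eps, hEglb, hE⟩ := h Δ hdir hglb
    refine ⟨Eps, hEglb, ?_⟩
    intro ε hε
    obtain ⟨δ, ⟨s, hs, hsub, rfl⟩, himp⟩ := hE ε hε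
    have key : ∀ t : Finset E, ↑t ⊆ Δ₀ → ∃ α₀ : ι, ∀ α, α₀ ≤ α → ∀ e ∈ t, |x α - c| ≤ e := by
      intro t
      induction t using Finset.induction_on with
      | empty => exact fun _ => ⟨Classical.arbitrary ι, by simp⟩
      | @insert a t ha ih =>
        intro hsub'
        obtain ⟨α₁, hα₁⟩ := ih (fun e he => hsub' (by simp [he]))
        obtain ⟨α₂, hα₂⟩ := hev a (hsub' (by simp))
        refine ⟨α₁ ⊔ α₂, ?_⟩
        intro α hα e he
        rcases Finset.mem_insert.mp he with rfl | he
        · exact hα₂ α (le_trans le_sup_right hα)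
        · exact hα₁ α (le_trans le_sup_left hα) e he
    obtain ⟨α₀, hα₀⟩ := key s hsub
    refine ⟨α₀, ?_⟩
    intro α hα
    exact himp (x α) (hxD α) (Finset.le_inf' hs id fun b hb => hα₀ α hα b hb)


end
end

section
/- In ℝ^ℕ (with pointwise order and multiplication), a function f : ℝ^ℕ → ℝ^ℕ is locally band preserving if and only if it is defined coordinatewise, i.e., there exist functions f_n : ℝ → ℝ such that f(x)(n) = f_n(x(n)) for all x ∈ ℝ^ℕ and n ∈ ℕ. -/
/-- a function on `ℝ^ℕ` is locally band preserving iff it is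
defined coordinatewise. -/
theorem stmt14 (f : (ℕ → ℝ) → (ℕ → ℝ)) :
    (∀ x y z : ℕ → ℝ, |x - y| ⊓ |z| = 0 → |f x - f y| ⊓ |z| = 0) ↔
    (∃ g : ℕ → ℝ → ℝ, ∀ (x : ℕ → ℝ) (n : ℕ), f x n = g n (x n)) := by
  constructor
  · intro h
    have key : ∀ (a b : ℕ → ℝ) (n : ℕ), a n = b n → f a n = f b n := by
      intro a b n hab
      have hz : |a - b| ⊓ |(fun m => if m = n then (1:ℝ) else 0)| = 0 := by
        funext m
        simp only [Pi.inf_apply, Pi.abs_apply, Pi.sub_apply, Pi.zero_apply]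
        by_cases hm : m = n
        · subst hm; simp [hab]
        · simp [hm, abs_nonneg]
      have h2 := congrFun (h a b _ hz) n
      simp only [Pi.inf_apply, Pi.abs_apply, Pi.sub_apply, Pi.zero_apply,
        if_pos rfl, abs_one] at h2
      have h2' : min (|f a n - f b n|) 1 = 0 := by simpa using h2
      rcases min_eq_iff.mp h2' with ⟨h0, _⟩ | ⟨h0, _⟩
      · exact sub_eq_zero.mp (abs_eq_zero.mp h0)
      · exact absurd h0 one_ne_zero
    refine ⟨fun n t => f (fun _ => t) n, fun x n => key x (fun _ => x n) n rfl⟩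
  · rintro ⟨g, hg⟩ x y z hz
    funext n
    have h2 := congrFun hz n
    simp only [Pi.inf_apply, Pi.abs_apply, Pi.sub_apply, Pi.zero_apply] at h2 ⊢
    rcases le_total (|x n - y n|) (|z n|) with hle | hle
    · have hx : |x n - y n| = 0 := by
        rw [inf_eq_left.mpr hle] at h2; exact h2
      have hxy : x n = y n := sub_eq_zero.mp (abs_eq_zero.mp hx)
      rw [hg x n, hg y n, hxy]
      simp
    · have hzn : |z n| = 0 := by
        rw [inf_eq_right.mpr hle] at h2; exact h2
      rw [hzn]
      exact inf_eq_right.mpr (abs_nonneg _)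
end

section
/- Let E be a Dedekind complete Φ-algebra, let a ≤ c ≤ d ≤ b in E, and let f : [a,b] → E be locally band preserving. If f(y) ≤ M for all y ∈ [c,d], then for every x ∈ [a,b], P(f(x)) ≤ P(M) where P := P_{c≤x} P_{x≤d} is the composition of the band projections onto ((c−x)⁺)ᵈ and ((x−d)⁺)ᵈ. -/
variable {E : Type*}

section MyHelpers
variable [Lattice E] [AddCommGroup E] [CovariantClass E E (· + ·) (· ≤ ·)]

lemma my_abs_sub_le (a b : E) : |a - b| ≤ |a| + |b| := by
  rw [sub_eq_add_neg]
  simpa [abs_neg] using abs_add_le a (-b)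

lemma my_inf_add_le (z p q : E) (hz : 0 ≤ z) (hp : 0 ≤ p) (hq : 0 ≤ q) :
    z ⊓ (p + q) ≤ z ⊓ p + z ⊓ q := by
  have h : z ⊓ p + z ⊓ q = ((z + z) ⊓ (z + q)) ⊓ ((p + z) ⊓ (p + q)) := by
    rw [inf_add z p (z ⊓ q), add_inf z q z, add_inf z q p]
  rw [h]
  refine le_inf (le_inf ?_ ?_) (le_inf ?_ ?_)
  · exact inf_le_left.trans (le_add_of_nonneg_left hz)
  · exact inf_le_left.trans (le_add_of_nonneg_right hq)
  · exact inf_le_left.trans (le_add_of_nonneg_left hp)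
  · exact inf_le_right

lemma my_disj_add {z p q : E} (hz : 0 ≤ z) (hp : 0 ≤ p) (hq : 0 ≤ q)
    (h1 : z ⊓ p = 0) (h2 : z ⊓ q = 0) : z ⊓ (p + q) = 0 := by
  refine le_antisymm ?_ (le_inf hz (add_nonneg hp hq))
  calc z ⊓ (p + q) ≤ z ⊓ p + z ⊓ q := my_inf_add_le z p q hz hp hq
    _ = 0 := by rw [h1, h2, add_zero]

lemma my_dComp_sub {A : Set E} {z w : E} (hz : z ∈ dComp A) (hw : w ∈ dComp A) :
    z - w ∈ dComp A := by
  intro e he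
  have h1 := hz e he
  have h2 := hw e he
  refine le_antisymm ?_ (le_inf (abs_nonneg _) (abs_nonneg _))
  calc |z - w| ⊓ |e| ≤ (|z| + |w|) ⊓ |e| := inf_le_inf_right _ (my_abs_sub_le z w)
    _ = |e| ⊓ (|z| + |w|) := inf_comm _ _
    _ = 0 := my_disj_add (abs_nonneg e) (abs_nonneg z) (abs_nonneg w)
          (by rw [inf_comm]; exact h1) (by rw [inf_comm]; exact h2)

lemma my_zero_mem_dComp {A : Set E} : (0 : E) ∈ dComp A := by
  intro e _
  rw [abs_zero]
  exact inf_eq_left.mpr (abs_nonneg e)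

lemma my_decomp_unique {A : Set E} {s r s' r' : E}
    (hs : s ∈ dComp A) (hs' : s' ∈ dComp A)
    (hr : r ∈ dComp (dComp A)) (hr' : r' ∈ dComp (dComp A))
    (h : s + r = s' + r') : s = s' := by
  have h1 : s - s' ∈ dComp A := my_dComp_sub hs hs'
  have h2 : r' - r ∈ dComp (dComp A) := my_dComp_sub hr' hr
  have heq : s - s' = r' - r := by
    rw [sub_eq_sub_iff_add_eq_add, add_comm r' s']
    exact h
  have h0 : |r' - r| ⊓ |s - s'| = 0 := h2 (s - s') h1
  rw [← heq, inf_idem] at h0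
  have hle : s - s' ≤ 0 := (le_abs_self _).trans h0.le
  have hge : -(s - s') ≤ 0 := (neg_le_abs _).trans h0.le
  have : s - s' = 0 := le_antisymm hle (by simpa using hge)
  exact sub_eq_zero.mp this

lemma my_decomp_nonneg {A : Set E} {s r : E}
    (hs : s ∈ dComp A) (hr : r ∈ dComp (dComp A)) (h : 0 ≤ s + r) : 0 ≤ s := by
  have hd : |r| ⊓ |s| = 0 := hr s hs
  have hns : -s ≤ r := by
    have := add_le_add_left h (-s)
    simpa using this
  have h1 : (-s) ⊔ 0 ≤ |s| := sup_le (neg_le_abs s) (abs_nonneg s)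
  have h2 : (-s) ⊔ 0 ≤ |r| := sup_le (hns.trans (le_abs_self r)) (abs_nonneg r)
  have h3 : (-s) ⊔ 0 ≤ 0 := by
    calc (-s) ⊔ 0 ≤ |r| ⊓ |s| := le_inf h2 h1
      _ = 0 := hd
  have : -s ≤ 0 := le_sup_left.trans h3
  simpa using this

lemma my_self_mem_bandGen (u : E) : u ∈ bandGen u := by
  intro e he
  rw [inf_comm]
  exact he u rfl

lemma my_bp_mono {A : Set E} {P : E → E} (h : IsBandProjection (dComp A) P)
    {w₁ w₂ : E} (hw : w₁ ≤ w₂) : P w₁ ≤ P w₂ := by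
  have hs : P w₂ - P w₁ ∈ dComp A := my_dComp_sub (h.1 w₂) (h.1 w₁)
  have hr : (w₂ - P w₂) - (w₁ - P w₁) ∈ dComp (dComp A) :=
    my_dComp_sub (h.2 w₂) (h.2 w₁)
  have hsum : 0 ≤ (P w₂ - P w₁) + ((w₂ - P w₂) - (w₁ - P w₁)) := by
    have he : (P w₂ - P w₁) + ((w₂ - P w₂) - (w₁ - P w₁)) = w₂ - w₁ := by abel
    rw [he]
    exact sub_nonneg.mpr hw
  exact sub_nonneg.mp (my_decomp_nonneg hs hr hsum)

end MyHelpers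

/-- if `f` is locally band preserving on `[a,b]` and bounded above
by `M` on `[c,d]`, then `P_{c≤x} P_{x≤d} (f x) ≤ P_{c≤x} P_{x≤d} M`. -/
theorem stmt15 [ConditionallyCompleteLattice E] [CommRing E]
    [CovariantClass E E (· + ·) (· ≤ ·)]
    (hmulpos : ∀ a b : E, 0 ≤ a → 0 ≤ b → 0 ≤ a * b)
    (hfalg : ∀ a b c : E, a ⊓ b = 0 → 0 ≤ c → (c * a) ⊓ b = 0)
    (a b c d M : E) (hac : a ≤ c) (hcd : c ≤ d) (hdb : d ≤ b)
    (f : E → E)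
    (hlbp : ∀ x ∈ Set.Icc a b, ∀ y ∈ Set.Icc a b, ∀ z : E,
      |x - y| ⊓ |z| = 0 → |f x - f y| ⊓ |z| = 0)
    (hM : ∀ y ∈ Set.Icc c d, f y ≤ M)
    (x : E) (hx : x ∈ Set.Icc a b)
    (P₁ P₂ : E → E)
    (h₁ : IsBandProjection (dComp (bandGen ((c - x) ⊔ 0))) P₁)
    (h₂ : IsBandProjection (dComp (bandGen ((x - d) ⊔ 0))) P₂) :
    P₁ (P₂ (f x)) ≤ P₁ (P₂ M) := by
  set u : E := (c - x) ⊔ 0 with hu_def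
  set v : E := (x - d) ⊔ 0 with hv_def
  have hu0 : (0 : E) ≤ u := le_sup_right
  have hv0 : (0 : E) ≤ v := le_sup_right
  -- the truncation y = (x ⊔ c) ⊓ d written as x + u - v
  have hxc : x + u = x ⊔ c := by
    rw [hu_def, add_sup]
    rw [show x + (c - x) = c by abel, add_zero, sup_comm]
  have hv' : v = ((x ⊔ c) - d) ⊔ 0 := by
    have h1 : (x ⊔ c) - d = (x - d) ⊔ (c - d) := by
      rw [sub_eq_add_neg, sup_add, ← sub_eq_add_neg, ← sub_eq_add_neg]
    rw [hv_def, h1, sup_assoc, sup_eq_right.mpr (sub_nonpos.mpr hcd)]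
  set y : E := x + u - v with hy_def
  have hy_alt : y = (x ⊔ c) - (((x ⊔ c) - d) ⊔ 0) := by rw [hy_def, hxc, ← hv']
  have hxy : x - y = v - u := by rw [hy_def]; abel
  have hcy : c ≤ y := by
    rw [hy_alt]
    refine le_sub_iff_add_le.mpr ?_
    rw [add_sup, add_zero]
    refine sup_le ?_ le_sup_right
    have h1 : c + ((x ⊔ c) - d) ≤ c + ((x ⊔ c) - c) :=
      add_le_add_right (sub_le_sub_left hcd _) c
    simpa using h1
  have hyd : y ≤ d := by
    rw [hy_alt]
    refine sub_le_iff_le_add.mpr ?_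
    rw [add_comm]
    exact sub_le_iff_le_add.mp le_sup_left
  have hy : y ∈ Set.Icc a b := ⟨hac.trans hcy, hyd.trans hdb⟩
  have hg := hlbp x hx y hy
  -- u and v are disjoint, and |x - y| ≤ u + v
  have huv : u ⊓ v = 0 := by
    have h1 : u ≤ (d - x) ⊔ 0 := sup_le_sup_right (sub_le_sub_right hcd x) 0
    have h2 : ((d - x) ⊔ 0) ⊓ ((x - d) ⊔ 0) = 0 := by
      have h3 := posPart_inf_negPart_eq_zero (x - d)
      rw [posPart_def, negPart_def] at h3
      rw [show d - x = -(x - d) by abel, inf_comm]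
      exact h3
    refine le_antisymm ?_ (le_inf hu0 hv0)
    calc u ⊓ v ≤ ((d - x) ⊔ 0) ⊓ v := inf_le_inf_right v h1
      _ = 0 := h2
  have hvu : |x - y| ≤ u + v := by
    rw [hxy]
    calc |v - u| ≤ |v| + |u| := my_abs_sub_le v u
      _ = u + v := by rw [abs_of_nonneg hu0, abs_of_nonneg hv0, add_comm]
  -- the component of f x - f y in the band (bandGen v)ᵈ
  have hs₂ : P₂ (f x) - P₂ (f y) ∈ dComp (bandGen v) :=
    my_dComp_sub (h₂.1 (f x)) (h₂.1 (f y))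
  have hr₂ : (f x - P₂ (f x)) - (f y - P₂ (f y)) ∈ dComp (dComp (bandGen v)) :=
    my_dComp_sub (h₂.2 (f x)) (h₂.2 (f y))
  set s₂ : E := P₂ (f x) - P₂ (f y) with hs₂_def
  set r₂ : E := (f x - P₂ (f x)) - (f y - P₂ (f y)) with hr₂_def
  have hsum : s₂ + r₂ = f x - f y := by rw [hs₂_def, hr₂_def]; abel
  -- key claim: s₂ lies in the band generated by u, i.e. in (dComp (bandGen u))ᵈ
  have hkey : s₂ ∈ dComp (dComp (bandGen u)) := by
    intro z hz
    set t : E := |z| ⊓ |s₂| with ht_def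
    have ht0 : (0 : E) ≤ t := le_inf (abs_nonneg z) (abs_nonneg s₂)
    have htu : t ⊓ u = 0 := by
      have h1 : |z| ⊓ |u| = 0 := hz u (my_self_mem_bandGen u)
      rw [abs_of_nonneg hu0] at h1
      refine le_antisymm ?_ (le_inf ht0 hu0)
      calc t ⊓ u ≤ |z| ⊓ u := inf_le_inf_right u inf_le_left
        _ = 0 := h1
    have htv : t ⊓ v = 0 := by
      have h1 : |s₂| ⊓ |v| = 0 := hs₂ v (my_self_mem_bandGen v)
      rw [abs_of_nonneg hv0] at h1
      refine le_antisymm ?_ (le_inf ht0 hv0)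
      calc t ⊓ v ≤ |s₂| ⊓ v := inf_le_inf_right v inf_le_right
        _ = 0 := h1
    have htuv : t ⊓ (u + v) = 0 := my_disj_add ht0 hu0 hv0 htu htv
    have htxy : |x - y| ⊓ |t| = 0 := by
      rw [abs_of_nonneg ht0, inf_comm]
      refine le_antisymm ?_ (le_inf ht0 (abs_nonneg _))
      calc t ⊓ |x - y| ≤ t ⊓ (u + v) := inf_le_inf_left t hvu
        _ = 0 := htuv
    have hgt : |f x - f y| ⊓ t = 0 := by
      have := hg t htxy
      rwa [abs_of_nonneg ht0] at this
    have hrt : |r₂| ⊓ t = 0 := by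
      have h1 : |r₂| ⊓ |s₂| = 0 := hr₂ s₂ hs₂
      refine le_antisymm ?_ (le_inf (abs_nonneg _) ht0)
      calc |r₂| ⊓ t ≤ |r₂| ⊓ |s₂| := inf_le_inf_left _ inf_le_right
        _ = 0 := h1
    have hst : |s₂| ⊓ t = 0 := by
      have h1 : |s₂| ≤ |f x - f y| + |r₂| := by
        have he : s₂ = (f x - f y) - r₂ := by rw [← hsum]; abel
        rw [he]
        exact my_abs_sub_le _ _
      have h2 : t ⊓ (|f x - f y| + |r₂|) = 0 :=
        my_disj_add ht0 (abs_nonneg _) (abs_nonneg _)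
          (by rw [inf_comm]; exact hgt) (by rw [inf_comm]; exact hrt)
      refine le_antisymm ?_ (le_inf (abs_nonneg _) ht0)
      calc |s₂| ⊓ t ≤ (|f x - f y| + |r₂|) ⊓ t := inf_le_inf_right t h1
        _ = 0 := by rw [inf_comm]; exact h2
    calc |s₂| ⊓ |z| = |s₂| ⊓ t := by
          rw [ht_def, inf_comm |z| |s₂|, ← inf_assoc, inf_idem]
      _ = 0 := hst
  -- conclude: P₁ P₂ (f x) = P₁ P₂ (f y)
  have heq : P₁ (P₂ (f x)) = P₁ (P₂ (f y)) := by
    have ha : P₁ (P₂ (f x)) - P₁ (P₂ (f y)) ∈ dComp (bandGen u) :=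
      my_dComp_sub (h₁.1 _) (h₁.1 _)
    have hb : (P₂ (f x) - P₁ (P₂ (f x))) - (P₂ (f y) - P₁ (P₂ (f y)))
        ∈ dComp (dComp (bandGen u)) := my_dComp_sub (h₁.2 _) (h₁.2 _)
    have hsum2 : (P₁ (P₂ (f x)) - P₁ (P₂ (f y)))
        + ((P₂ (f x) - P₁ (P₂ (f x))) - (P₂ (f y) - P₁ (P₂ (f y)))) = 0 + s₂ := by
      rw [hs₂_def]; abel
    have h0 := my_decomp_unique ha my_zero_mem_dComp hb hkey hsum2
    exact sub_eq_zero.mp h0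
  -- monotonicity
  have hfyM : f y ≤ M := hM y ⟨hcy, hyd⟩
  have h2m : P₂ (f y) ≤ P₂ M := my_bp_mono h₂ hfyM
  have h1m : P₁ (P₂ (f y)) ≤ P₁ (P₂ M) := my_bp_mono h₁ h2m
  rw [heq]
  exact h1m
end

section
/- Let E be a Dedekind complete Φ-algebra, a ≤ c ≤ d ≤ b in E, f : [a,b] → E locally band preserving, x ∈ [a,b], and ε, δ ∈ E⁺. Suppose that for all y ∈ [a,b], |x − y| ≤ δ implies |f(x) − f(y)| ≤ ε. Then for every band projection P and every y ∈ [a,b]: P(|x − y|) ≤ P(δ) implies P(|f(x) − f(y)|) ≤ P(ε). -/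
variable {E : Type*}

section AuxLemmas
variable [Lattice E] [AddCommGroup E] [CovariantClass E E (· + ·) (· ≤ ·)]

lemma aux_inf_add_le (p q w : E) (hp : 0 ≤ p) (hq : 0 ≤ q) (hw : 0 ≤ w) :
    (p + q) ⊓ w ≤ p ⊓ w + q ⊓ w := by
  have h1 : p ⊓ w + q ⊓ w = ((p + q) ⊓ (p + w)) ⊓ ((w + q) ⊓ (w + w)) := by
    rw [inf_add, add_inf, add_inf]
  rw [h1]
  refine le_inf (le_inf inf_le_left ?_) (le_inf ?_ ?_)
  · exact inf_le_right.trans (le_add_of_nonneg_left hp)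
  · exact inf_le_right.trans (le_add_of_nonneg_right hq)
  · exact inf_le_right.trans (le_add_of_nonneg_left hw)

lemma aux_disj_of_le {u v w : E} (hu : 0 ≤ u) (huv : u ≤ v) (hw : 0 ≤ w)
    (h : v ⊓ w = 0) : u ⊓ w = 0 :=
  le_antisymm (h ▸ inf_le_inf_right w huv) (le_inf hu hw)

lemma aux_eq_zero_of_abs_eq_zero {u : E} (h : |u| = 0) : u = 0 :=
  le_antisymm ((le_abs_self u).trans h.le)
    (neg_nonpos.mp ((neg_le_abs u).trans h.le))

lemma aux_negPart_le_abs (a : E) : a⁻ ≤ |a| := by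
  rw [← posPart_add_negPart a]; exact le_add_of_nonneg_left (posPart_nonneg a)

lemma aux_posPart_le_abs (a : E) : a⁺ ≤ |a| := by
  rw [← posPart_add_negPart a]; exact le_add_of_nonneg_right (negPart_nonneg a)

lemma dComp_zero_mem (A : Set E) : (0 : E) ∈ dComp A := by
  intro z _; rw [abs_zero]; exact inf_eq_left.mpr (abs_nonneg z)

lemma dComp_neg_mem {A : Set E} {u : E} (h : u ∈ dComp A) : -u ∈ dComp A := by
  intro z hz; rw [abs_neg]; exact h z hz

lemma dComp_abs_mem {A : Set E} {u : E} (h : u ∈ dComp A) : |u| ∈ dComp A := by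
  intro z hz; rw [abs_abs]; exact h z hz

lemma dComp_add_mem {A : Set E} {u v : E} (hu : u ∈ dComp A) (hv : v ∈ dComp A) :
    u + v ∈ dComp A := by
  intro z hz
  have h0 : (|u| + |v|) ⊓ |z| = 0 := by
    refine le_antisymm ?_ (le_inf (add_nonneg (abs_nonneg u) (abs_nonneg v)) (abs_nonneg z))
    calc (|u| + |v|) ⊓ |z| ≤ |u| ⊓ |z| + |v| ⊓ |z| :=
          aux_inf_add_le _ _ _ (abs_nonneg u) (abs_nonneg v) (abs_nonneg z)
      _ = 0 := by rw [hu z hz, hv z hz, add_zero]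
  exact aux_disj_of_le (abs_nonneg _) (abs_add_le u v) (abs_nonneg z) h0

lemma dComp_sub_mem {A : Set E} {u v : E} (hu : u ∈ dComp A) (hv : v ∈ dComp A) :
    u - v ∈ dComp A := by
  rw [sub_eq_add_neg]; exact dComp_add_mem hu (dComp_neg_mem hv)

lemma aux_abs_add_of_disj {p q : E} (hd : |p| ⊓ |q| = 0) : |p + q| = |p| + |q| := by
  have key : ∀ r s : E, |r| ⊓ |s| = 0 → |r| ≤ |r + s| := by
    intro r s hrs
    have h1 : |r| ≤ |r + s| + |s| := by
      have h2 : |(r + s) + (-s)| ≤ |r + s| + |(-s)| := abs_add_le _ _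
      rwa [add_neg_cancel_right, abs_neg] at h2
    calc |r| = (|r + s| + |s|) ⊓ |r| := by rw [inf_comm]; exact (inf_eq_left.mpr h1).symm
      _ ≤ |r + s| ⊓ |r| + |s| ⊓ |r| :=
          aux_inf_add_le _ _ _ (abs_nonneg _) (abs_nonneg _) (abs_nonneg _)
      _ = |r + s| ⊓ |r| := by rw [inf_comm |s| |r|, hrs, add_zero]
      _ ≤ |r + s| := inf_le_left
  have hp : |p| ≤ |p + q| := key p q hd
  have hq : |q| ≤ |p + q| := by
    rw [add_comm]; exact key q p (by rw [inf_comm]; exact hd)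
  refine le_antisymm (abs_add_le p q) ?_
  calc |p| + |q| = |p| ⊓ |q| + |p| ⊔ |q| := (inf_add_sup _ _).symm
    _ = |p| ⊔ |q| := by rw [hd, zero_add]
    _ ≤ |p + q| := sup_le hp hq

section Projection
variable {B : Set E} {Pr : E → E} (hB : IsBand B) (hP : IsBandProjection B Pr)
include hB hP

lemma band_unique {p₁ q₁ p₂ q₂ : E} (hp₁ : p₁ ∈ B) (hq₁ : q₁ ∈ dComp B)
    (hp₂ : p₂ ∈ B) (hq₂ : q₂ ∈ dComp B) (heq : p₁ + q₁ = p₂ + q₂) : p₁ = p₂ := by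
  have hd : p₁ - p₂ = q₂ - q₁ := by
    rw [sub_eq_sub_iff_add_eq_add, heq, add_comm]
  have hmem : p₁ - p₂ ∈ B := by
    rw [← hB] at hp₁ hp₂ ⊢; exact dComp_sub_mem hp₁ hp₂
  have hmem' : p₁ - p₂ ∈ dComp B := hd ▸ dComp_sub_mem hq₂ hq₁
  have : |p₁ - p₂| ⊓ |p₁ - p₂| = 0 := hmem' _ hmem
  rw [inf_idem] at this
  exact sub_eq_zero.mp (aux_eq_zero_of_abs_eq_zero this)

lemma band_Pr_add (u v : E) : Pr (u + v) = Pr u + Pr v := by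
  have hp₂ : Pr u + Pr v ∈ B := by
    rw [← hB] at *; exact dComp_add_mem (hP.1 u) (hP.1 v)
  refine band_unique hB hP (hP.1 (u + v)) (hP.2 (u + v)) hp₂
    (dComp_add_mem (hP.2 u) (hP.2 v)) ?_
  abel

lemma band_Pr_eq_self {z : E} (hz : z ∈ B) : Pr z = z :=
  band_unique hB hP (hP.1 z) (hP.2 z) hz (dComp_zero_mem B) (by abel)

lemma band_Pr_eq_zero {z : E} (hz : z ∈ dComp B) : Pr z = 0 := by
  have h0B : (0 : E) ∈ B := by rw [← hB]; exact dComp_zero_mem _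
  exact band_unique hB hP (hP.1 z) (hP.2 z) h0B hz (by abel)

lemma band_Pr_sub (u v : E) : Pr (u - v) = Pr u - Pr v := by
  have h := band_Pr_add hB hP (u - v) v
  rw [sub_add_cancel] at h
  rw [eq_sub_iff_add_eq, ← h]

lemma band_Pr_nonneg {z : E} (hz : 0 ≤ z) : 0 ≤ Pr z ∧ Pr z ≤ z := by
  set p := Pr z with hp
  set q := z - Pr z with hq
  have hdisj : |p| ⊓ |q| = 0 := by rw [inf_comm]; exact hP.2 z p (hP.1 z)
  have hpq : -p ≤ q := by rw [neg_le]; rw [hq]; simpa [hp] using hz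
  have hqp : -q ≤ p := by
    rw [neg_le]; rw [hq]; simpa [sub_le_iff_le_add, hp] using hz
  have h1 : p⁻ ≤ (0 : E) := by
    have h2 : p⁻ ≤ q⁺ := by simpa using posPart_mono hpq
    have : p⁻ ≤ |p| ⊓ |q| :=
      le_inf (aux_negPart_le_abs p) (h2.trans (aux_posPart_le_abs q))
    rwa [hdisj] at this
  have hppos : 0 ≤ p := negPart_eq_zero.mp (le_antisymm h1 (negPart_nonneg p))
  have h1' : q⁻ ≤ (0 : E) := by
    have h2 : q⁻ ≤ p⁺ := by simpa using posPart_mono hqp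
    have : q⁻ ≤ |p| ⊓ |q| :=
      le_inf (h2.trans (aux_posPart_le_abs p)) (aux_negPart_le_abs q)
    rwa [hdisj] at this
  have hqpos : 0 ≤ q := negPart_eq_zero.mp (le_antisymm h1' (negPart_nonneg q))
  exact ⟨hppos, by rw [← sub_nonneg]; exact hqpos⟩

lemma band_Pr_mono {u v : E} (huv : u ≤ v) : Pr u ≤ Pr v := by
  have := (band_Pr_nonneg hB hP (sub_nonneg.mpr huv)).1
  rw [band_Pr_sub hB hP] at this
  exact sub_nonneg.mp this

lemma band_Pr_abs (z : E) : Pr |z| = |Pr z| := by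
  have hdisj : |Pr z| ⊓ |z - Pr z| = 0 := by
    rw [inf_comm]; exact hP.2 z (Pr z) (hP.1 z)
  have hpB : |Pr z| ∈ B := by
    have h1 : |Pr z| ∈ dComp (dComp B) := dComp_abs_mem (subset_dComp_dComp B (hP.1 z))
    rwa [hB] at h1
  refine band_unique hB hP (hP.1 |z|) (hP.2 |z|) hpB (dComp_abs_mem (hP.2 z)) ?_
  have : |z| = |Pr z| + |z - Pr z| := by
    conv_lhs => rw [show z = Pr z + (z - Pr z) by abel]
    exact aux_abs_add_of_disj hdisj
  rw [add_sub_cancel, this]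

end Projection
end AuxLemmas

/-- an ε-δ estimate for a locally band preserving function on
`[a,b]` localises to every band projection. -/
theorem stmt16 [ConditionallyCompleteLattice E] [CommRing E]
    [CovariantClass E E (· + ·) (· ≤ ·)]
    (hmulpos : ∀ a b : E, 0 ≤ a → 0 ≤ b → 0 ≤ a * b)
    (hfalg : ∀ a b c : E, a ⊓ b = 0 → 0 ≤ c → (c * a) ⊓ b = 0)
    (a b c d : E) (hac : a ≤ c) (hcd : c ≤ d) (hdb : d ≤ b)
    (f : E → E)
    (hlbp : ∀ x ∈ Set.Icc a b, ∀ y ∈ Set.Icc a b, ∀ z : E,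
      |x - y| ⊓ |z| = 0 → |f x - f y| ⊓ |z| = 0)
    (x : E) (hx : x ∈ Set.Icc a b)
    (ε δ : E) (hε : 0 ≤ ε) (hδ : 0 ≤ δ)
    (h : ∀ y ∈ Set.Icc a b, |x - y| ≤ δ → |f x - f y| ≤ ε) :
    ∀ (B : Set E) (Pr : E → E), IsBand B → IsBandProjection B Pr →
      ∀ y ∈ Set.Icc a b, Pr |x - y| ≤ Pr δ → Pr |f x - f y| ≤ Pr ε := by
  intro B Pr hB hP y hy hPxy
  set u := x + Pr (y - x) with hu
  have hPsub := band_Pr_sub hB hP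
  have hPnn : ∀ {z : E}, 0 ≤ z → 0 ≤ Pr z := fun hz => (band_Pr_nonneg hB hP hz).1
  have hPle : ∀ {z : E}, 0 ≤ z → Pr z ≤ z := fun hz => (band_Pr_nonneg hB hP hz).2
  have hau : a ≤ u := by
    rw [← sub_nonneg]
    have h3 : Pr (y - x) = Pr (y - a) - Pr (x - a) := by
      rw [← hPsub, sub_sub_sub_cancel_right]
    have key : u - a = ((x - a) - Pr (x - a)) + Pr (y - a) := by
      rw [hu, h3]; abel
    rw [key]
    exact add_nonneg (sub_nonneg.mpr (hPle (sub_nonneg.mpr hx.1)))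
      (hPnn (sub_nonneg.mpr hy.1))
  have hub : u ≤ b := by
    rw [← sub_nonneg]
    have h3 : Pr (y - x) = Pr (b - x) - Pr (b - y) := by
      rw [← hPsub, sub_sub_sub_cancel_left]
    have key : b - u = ((b - x) - Pr (b - x)) + Pr (b - y) := by
      rw [hu, h3]; abel
    rw [key]
    exact add_nonneg (sub_nonneg.mpr (hPle (sub_nonneg.mpr hx.2)))
      (hPnn (sub_nonneg.mpr hy.2))
  have hxu : x - u = Pr (x - y) := by
    have : Pr (x - y) = Pr x - Pr y := hPsub x y
    rw [hu, this, hPsub y x]; abel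
  have hxud : |x - u| ≤ δ := by
    rw [hxu, ← band_Pr_abs hB hP]
    exact (hPxy).trans (hPle hδ)
  have hfxu : |f x - f u| ≤ ε := h u ⟨hau, hub⟩ hxud
  have huy : u - y ∈ dComp B := by
    have key : u - y = (x - Pr x) - (y - Pr y) := by
      rw [hu, hPsub y x]; abel
    rw [key]
    exact dComp_sub_mem (hP.2 x) (hP.2 y)
  have hfuy : f u - f y ∈ dComp B := by
    intro z hz
    exact hlbp u ⟨hau, hub⟩ y hy z (huy z hz)
  have hPfuy : Pr |f u - f y| = 0 := by
    rw [band_Pr_abs hB hP, band_Pr_eq_zero hB hP hfuy, abs_zero]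
  have tri : |f x - f y| ≤ |f x - f u| + |f u - f y| := by
    calc |f x - f y| = |(f x - f u) + (f u - f y)| := by rw [sub_add_sub_cancel]
      _ ≤ _ := abs_add_le _ _
  calc Pr |f x - f y| ≤ Pr (|f x - f u| + |f u - f y|) := band_Pr_mono hB hP tri
    _ = Pr |f x - f u| + Pr |f u - f y| := band_Pr_add hB hP _ _
    _ = Pr |f x - f u| := by rw [hPfuy, add_zero]
    _ ≤ Pr ε := band_Pr_mono hB hP hfxu
end

section
/- Consider the Dedekind complete Φ-algebra E = ℝ², and the function f : [(0,0),(1,1)] → ℝ² defined by f(x,y) = (x, x²). Then f is order continuous, f(0,0) = (0,0), f(1,1) = (1,1), and (1/2, 1/2) lies between f(0,0) and f(1,1), but there is no point c in the order interval [(0,0),(1,1)] with f(c) = (1/2, 1/2). (Hence the Intermediate Value Theorem fails for order continuous functions that are not locally band preserving.) -/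
/-- in `ℝ²`, the order continuous function `f (x,y) = (x, x²)` on
`[(0,0),(1,1)]` satisfies `f (0,0) = (0,0)` and `f (1,1) = (1,1)`, the value
`(1/2, 1/2)` lies between them, yet is not attained: the Intermediate Value
Theorem fails. -/
theorem stmt18 (f : ℝ × ℝ → ℝ × ℝ) (hf : ∀ p : ℝ × ℝ, f p = (p.1, p.1 ^ 2)) :
    ContinuousOn f (Set.Icc ((0 : ℝ), (0 : ℝ)) ((1 : ℝ), (1 : ℝ))) ∧
    f ((0 : ℝ), (0 : ℝ)) = ((0 : ℝ), (0 : ℝ)) ∧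
    f ((1 : ℝ), (1 : ℝ)) = ((1 : ℝ), (1 : ℝ)) ∧
    ((1 / 2 : ℝ), (1 / 2 : ℝ)) ∈
      Set.Icc (f ((0 : ℝ), (0 : ℝ))) (f ((1 : ℝ), (1 : ℝ))) ∧
    ¬ ∃ c ∈ Set.Icc ((0 : ℝ), (0 : ℝ)) ((1 : ℝ), (1 : ℝ)),
        f c = ((1 / 2 : ℝ), (1 / 2 : ℝ)) := by
  have hfe : f = fun p : ℝ × ℝ => (p.1, p.1 ^ 2) := funext hf
  subst hfe
  refine ⟨?_, ?_, ?_, ?_, ?_⟩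
  · exact (continuous_fst.prodMk (continuous_fst.pow 2)).continuousOn
  · norm_num
  · norm_num
  · constructor <;> simp [Prod.le_def] <;> norm_num
  · rintro ⟨c, hc, hfc⟩
    obtain ⟨h1, h2⟩ := Prod.mk.injEq .. ▸ hfc
    rw [h1] at h2
    norm_num at h2
end

section
/- Consider the Dedekind complete Φ-algebra E = ℝ² and g : [(0,0),(1,1)] → ℝ² given by g(x,y) = (x, 1−x). Then g is order continuous and order bounded, sup{g(x,y) : (x,y) ∈ [(0,0),(1,1)]} = (1,1), but there is no point in the domain at which g attains the value (1,1). (Hence the Extreme Value Theorem fails for order continuous functions that are not locally band preserving.) -/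
/-- in `ℝ²`, the order continuous, order bounded function
`g (x,y) = (x, 1 - x)` on `[(0,0),(1,1)]` has supremum `(1,1)` over the
interval, but never attains it: the Extreme Value Theorem fails. -/
theorem stmt19 (g : ℝ × ℝ → ℝ × ℝ) (hg : ∀ p : ℝ × ℝ, g p = (p.1, 1 - p.1)) :
    ContinuousOn g (Set.Icc ((0 : ℝ), (0 : ℝ)) ((1 : ℝ), (1 : ℝ))) ∧
    (∃ m M : ℝ × ℝ, ∀ p ∈ Set.Icc ((0 : ℝ), (0 : ℝ)) ((1 : ℝ), (1 : ℝ)),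
      m ≤ g p ∧ g p ≤ M) ∧
    IsLUB (g '' Set.Icc ((0 : ℝ), (0 : ℝ)) ((1 : ℝ), (1 : ℝ)))
      ((1 : ℝ), (1 : ℝ)) ∧
    ¬ ∃ p ∈ Set.Icc ((0 : ℝ), (0 : ℝ)) ((1 : ℝ), (1 : ℝ)),
        g p = ((1 : ℝ), (1 : ℝ)) := by
  have hge : g = fun p : ℝ × ℝ => (p.1, 1 - p.1) := funext hg
  refine ⟨?_, ⟨(0, 0), (1, 1), ?_⟩, ⟨?_, ?_⟩, ?_⟩
  · rw [hge]; fun_prop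
  · rintro p ⟨⟨h0, h0'⟩, ⟨h1, h1'⟩⟩
    simp only [Prod.le_def] at h0 h1 ⊢
    rw [hg]
    simp only
    constructor <;> constructor <;> linarith
  · rintro q ⟨p, ⟨⟨h0, h0'⟩, ⟨h1, h1'⟩⟩, rfl⟩
    simp only [Prod.le_def] at h0 h1 ⊢
    rw [hg]
    simp only
    constructor <;> linarith
  · intro b hb
    have h1 := hb ⟨(1, 1), by norm_num [Prod.le_def], rfl⟩
    have h2 := hb ⟨(0, 0), by norm_num [Prod.le_def], rfl⟩
    rw [hg] at h1 h2
    simp only [Prod.le_def] at h1 h2 ⊢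
    constructor <;> [exact h1.1; simpa using h2.2]
  · rintro ⟨p, hp, hgp⟩
    rw [hg] at hgp
    have h1 := congrArg Prod.fst hgp
    have h2 := congrArg Prod.snd hgp
    simp only at h1 h2
    linarith
end
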